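/- Let S be a finitely generated, cancellative, reduced commutative monoid minimally generated by A. An element a ∈ S has a unique presentation (its indispensable pair appears in every minimal presentation) if and only if a is a Betti element and #φ_A^{-1}(a) = 2, if and only if a is a Betti-minimal element and #φ_A^{-1}(a) = 2. -/
import Mathlib


open Finset

variable {M : Type*} [AddCommMonoid M] {r : ℕ}

/-- The factorization homomorphism associated to the generating tuple `A`. -/
def phi (A : Fin r → M) (u : Fin r → ℕ) : M := ∑ i, u i • A i

/-- One step of the relation `R`: two factorizations of `a` with nonzero dot product. -/
def step (A : Fin r → M) (a : M) (u v : Fin r → ℕ) : Prop :=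
  phi A u = a ∧ phi A v = a ∧ (∑ i, u i * v i) ≠ 0

/-- The relation `R` on the fiber of `a`: connected by a chain of factorizations with
consecutive nonzero dot products. -/
def Rrel (A : Fin r → M) (a : M) : (Fin r → ℕ) → (Fin r → ℕ) → Prop :=
  Relation.ReflTransGen (step A a)

/-- `a` is a Betti element: its fiber has more than one `R`-class. -/
def IsBetti (A : Fin r → M) (a : M) : Prop :=
  ∃ u v : Fin r → ℕ, phi A u = a ∧ phi A v = a ∧ ¬ Rrel A a u v

/-- `a` is Betti-minimal: a Betti element minimal with respect to `b ≺ a ↔ a - b ∈ S`. -/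
def BettiMinimal (A : Fin r → M) (a : M) : Prop :=
  IsBetti A a ∧ ∀ b : M, IsBetti A b → (∃ c : M, a = b + c) → b = a

/-- `a` has a unique presentation: exactly two factorizations, with disjoint support. -/
def HasUniquePres (A : Fin r → M) (a : M) : Prop :=
  ∃ u v : Fin r → ℕ, u ≠ v ∧ {w : Fin r → ℕ | phi A w = a} = {u, v} ∧
    (∑ i, u i * v i) = 0

/-- The monoid generated by `A` is uniquely presented: every Betti element has exactly two
factorizations, with disjoint support. -/
def UniquelyPresented (A : Fin r → M) : Prop :=
  ∀ a : M, IsBetti A a → HasUniquePres A a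
lemma phi_add' {M : Type*} [AddCommMonoid M] {r : ℕ} (A : Fin r → M) (u v : Fin r → ℕ) :
    phi A (u + v) = phi A u + phi A v := by
  simp [phi, add_smul, Finset.sum_add_distrib]

lemma phi_zero' {M : Type*} [AddCommMonoid M] {r : ℕ} (A : Fin r → M) :
    phi A (0 : Fin r → ℕ) = 0 := by simp [phi]

/-- In a fiber equal to a disjoint-support pair, `Rrel` from `u` only reaches `u`. -/
lemma rrel_fixed {M : Type*} [AddCommMonoid M] {r : ℕ} {A : Fin r → M} {a : M}
    {u v : Fin r → ℕ} (hfib : {w : Fin r → ℕ | phi A w = a} = {u, v})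
    (hdot : (∑ i, u i * v i) = 0) {x : Fin r → ℕ} (h : Rrel A a u x) : x = u := by
  induction h with
  | refl => rfl
  | tail _ hstep ih =>
    rename_i b c _
    obtain ⟨hb, hc, hne⟩ := hstep
    have hcmem : c ∈ ({u, v} : Set (Fin r → ℕ)) := hfib ▸ hc
    rcases hcmem with h1 | h1
    · exact h1
    · exfalso; subst ih h1; exact hne hdot

/-- Unique presentation implies the Betti + card-2 characterization. -/
lemma hup_iff {M : Type*} [AddCancelCommMonoid M] {r : ℕ} (A : Fin r → M) (a : M) :
    HasUniquePres A a ↔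
      (IsBetti A a ∧ {w : Fin r → ℕ | phi A w = a}.encard = 2) := by
  constructor
  · rintro ⟨u, v, huv, hfib, hdot⟩
    have hu : phi A u = a := (Set.ext_iff.mp hfib u).mpr (Or.inl rfl)
    have hv : phi A v = a := (Set.ext_iff.mp hfib v).mpr (Or.inr rfl)
    refine ⟨⟨u, v, hu, hv, fun h => huv ((rrel_fixed hfib hdot h).symm)⟩, ?_⟩
    rw [hfib]; exact Set.encard_pair huv
  · rintro ⟨⟨u, v, hu, hv, hnR⟩, hcard⟩
    obtain ⟨x, y, hxy, hfib⟩ := Set.encard_eq_two.mp hcard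
    have huv : u ≠ v := by rintro rfl; exact hnR Relation.ReflTransGen.refl
    have hum : u ∈ ({x, y} : Set (Fin r → ℕ)) := hfib ▸ hu
    have hvm : v ∈ ({x, y} : Set (Fin r → ℕ)) := hfib ▸ hv
    have hfib' : {w : Fin r → ℕ | phi A w = a} = {u, v} := by
      rcases hum with rfl | rfl <;> rcases hvm with rfl | rfl
      · exact absurd rfl huv
      · exact hfib
      · rw [hfib, Set.pair_comm]
      · exact absurd rfl huv
    have hdot : (∑ i, u i * v i) = 0 := by
      by_contra h
      exact hnR (Relation.ReflTransGen.single ⟨hu, hv, h⟩)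
    exact ⟨u, v, huv, hfib', hdot⟩

/-- `a` has a unique presentation iff `a` is a Betti element with exactly two factorizations,
iff `a` is Betti-minimal with exactly two factorizations. -/
theorem stmt3 {M : Type*} [AddCancelCommMonoid M] {r : ℕ} (A : Fin r → M)
    (hred : ∀ x y : M, x + y = 0 → x = 0)
    (hgen : ∀ s : M, ∃ u : Fin r → ℕ, phi A u = s)
    (hmin : ∀ i : Fin r, ¬ ∃ u : Fin r → ℕ, u i = 0 ∧ phi A u = A i)
    (a : M) :
    (HasUniquePres A a ↔
        (IsBetti A a ∧ {w : Fin r → ℕ | phi A w = a}.encard = 2)) ∧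
    ((IsBetti A a ∧ {w : Fin r → ℕ | phi A w = a}.encard = 2) ↔
        (BettiMinimal A a ∧ {w : Fin r → ℕ | phi A w = a}.encard = 2)) := by
  refine ⟨hup_iff A a, ?_, fun ⟨hbm, hc⟩ => ⟨hbm.1, hc⟩⟩
  rintro ⟨hB, hcard⟩
  refine ⟨⟨hB, ?_⟩, hcard⟩
  rintro b ⟨u', v', hu', hv', hnR⟩ ⟨c, hc⟩
  obtain ⟨u, v, huv, hfib, hdot⟩ := (hup_iff A a).mpr ⟨hB, hcard⟩
  obtain ⟨w, hw⟩ := hgen c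
  have h1 : phi A (u' + w) = a := by rw [phi_add', hu', hw, ← hc]
  have h2 : phi A (v' + w) = a := by rw [phi_add', hv', hw, ← hc]
  have hm1 : u' + w ∈ ({u, v} : Set (Fin r → ℕ)) := hfib ▸ h1
  have hm2 : v' + w ∈ ({u, v} : Set (Fin r → ℕ)) := hfib ▸ h2
  have hne : u' + w ≠ v' + w := by
    intro h
    exact hnR (by rw [add_right_cancel h]; exact Relation.ReflTransGen.refl)
  have hw0 : w = 0 := by
    by_contra hw0
    obtain ⟨i, hi⟩ := Function.ne_iff.mp hw0
    have hi' : w i ≠ 0 := by simpa using hi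
    have hterm : ∀ j, u j * v j = 0 :=
      fun j => (Finset.sum_eq_zero_iff.mp hdot) j (Finset.mem_univ j)
    have hpos : (u' i + w i) * (v' i + w i) ≠ 0 := Nat.mul_ne_zero (by omega) (by omega)
    rcases hm1 with rfl | rfl <;> rcases hm2 with h3 | h3
    · exact hne h3.symm
    · rw [← h3] at hterm; exact hpos (hterm i)
    · rw [← h3] at hterm
      exact hpos (by rw [mul_comm]; exact hterm i)
    · exact hne h3.symm
  rw [hw0, phi_zero'] at hw
  rw [hc, ← hw, add_zero]
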